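/- For every n ≥ 1 there exists an infinite sequence (Q_i)_{i ∈ ℕ} of subgroups of Houghton's group H_n such that each Q_i has order 2 and Q_i is not conjugate to Q_j in H_n whenever i ≠ j. Consequently, H_n has infinitely many conjugacy classes of subgroups isomorphic to the cyclic group of order 2 (so H_n is not quasi-O_Fin FP₀). -/

import Mathlib

/-- `f : ℕ × Fin n → ℕ × Fin n` is eventually a translation with translation
vector `m : Fin n → ℤ`: on each ray `ℕ × {x}`, for all sufficiently large `i`,
`f` sends `(i, x)` to `(i + m x, x)`. -/
def EvTrans (n : ℕ) (f : ℕ × Fin n → ℕ × Fin n) (m : Fin n → ℤ) : Prop :=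
  ∀ x : Fin n, ∃ z : ℕ, ∀ i : ℕ, z ≤ i →
    (f (i, x)).2 = x ∧ ((f (i, x)).1 : ℤ) = (i : ℤ) + m x

/-- Houghton's group `H_n`: the subgroup of the symmetric group on
`S = ℕ × Fin n` consisting of the permutations that are eventually
translations on each ray. -/
def Houghton (n : ℕ) : Subgroup (Equiv.Perm (ℕ × Fin n)) where
  carrier := {f : Equiv.Perm (ℕ × Fin n) | ∃ m : Fin n → ℤ, EvTrans n (⇑f) m}
  one_mem' := ⟨0, fun x => ⟨0, fun i _ => by simp⟩⟩
  mul_mem' := by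
    rintro a b ⟨ma, hA⟩ ⟨mb, hB⟩
    refine ⟨ma + mb, fun x => ?_⟩
    obtain ⟨za, hza⟩ := hA x
    obtain ⟨zb, hzb⟩ := hB x
    refine ⟨max zb ((za : ℤ) - mb x).toNat, fun i hi => ?_⟩
    have hib : zb ≤ i := le_trans (le_max_left _ _) hi
    obtain ⟨h2, h1⟩ := hzb i hib
    have hbx : (⇑b) (i, x) = ((b (i, x)).1, x) := Prod.ext_iff.mpr ⟨rfl, h2⟩
    have hk : za ≤ (b (i, x)).1 := by
      have h3 : ((za : ℤ) - mb x) ≤ (i : ℤ) := by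
        calc ((za : ℤ) - mb x) ≤ (((za : ℤ) - mb x).toNat : ℤ) := Int.self_le_toNat _
          _ ≤ (i : ℤ) := by exact_mod_cast le_trans (le_max_right _ _) hi
      have h4 : (za : ℤ) ≤ ((b (i, x)).1 : ℤ) := by rw [h1]; linarith
      exact_mod_cast h4
    obtain ⟨h4, h5⟩ := hza (b (i, x)).1 hk
    constructor
    · show ((a * b) (i, x)).2 = x
      rw [Equiv.Perm.mul_apply, hbx]
      exact h4
    · show (((a * b) (i, x)).1 : ℤ) = (i : ℤ) + (ma + mb) x
      rw [Equiv.Perm.mul_apply, hbx, h5, h1, Pi.add_apply]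
      ring
  inv_mem' := by
    rintro a ⟨m, hm⟩
    refine ⟨-m, fun x => ?_⟩
    obtain ⟨z, hz⟩ := hm x
    refine ⟨((z : ℤ) + m x).toNat, fun i hi => ?_⟩
    have h1 : (z : ℤ) + m x ≤ (i : ℤ) :=
      le_trans (Int.self_le_toNat _) (by exact_mod_cast hi)
    have h0 : (0 : ℤ) ≤ (i : ℤ) - m x := by
      have hz0 : (0 : ℤ) ≤ (z : ℤ) := Int.natCast_nonneg z
      linarith
    set j := ((i : ℤ) - m x).toNat with hjdef
    have hj' : (j : ℤ) = (i : ℤ) - m x := Int.toNat_of_nonneg h0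
    have hjz : z ≤ j := by
      have : (z : ℤ) ≤ (j : ℤ) := by rw [hj']; linarith
      exact_mod_cast this
    obtain ⟨h2, h3⟩ := hz j hjz
    have hfst : (a (j, x)).1 = i := by
      have : ((a (j, x)).1 : ℤ) = (i : ℤ) := by rw [h3, hj']; ring
      exact_mod_cast this
    have hfix : (⇑a) (j, x) = (i, x) := Prod.ext_iff.mpr ⟨hfst, h2⟩
    have hinv : (⇑a⁻¹) (i, x) = (j, x) := by
      rw [← hfix]
      exact Equiv.symm_apply_apply a (j, x)
    constructor
    · rw [hinv]
    · rw [hinv]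
      show (j : ℤ) = (i : ℤ) + (-m) x
      rw [hj', Pi.neg_apply]
      ring

/-! ### Auxiliary constructions for the proof -/

/-- Flip the last bit of a natural number. -/
def natFlip (m : ℕ) : ℕ := if m % 2 = 0 then m + 1 else m - 1

lemma natFlip_invol (m : ℕ) : natFlip (natFlip m) = m := by
  by_cases h : m % 2 = 0
  · have h1 : natFlip m = m + 1 := if_pos h
    have h2 : ¬ (m + 1) % 2 = 0 := by omega
    rw [h1]
    have h3 : natFlip (m + 1) = m + 1 - 1 := if_neg h2
    rw [h3]; omega
  · have h1 : natFlip m = m - 1 := if_neg h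
    have h2 : (m - 1) % 2 = 0 := by omega
    rw [h1]
    have h3 : natFlip (m - 1) = m - 1 + 1 := if_pos h2
    rw [h3]; omega

lemma natFlip_lt {k m : ℕ} (h : m < 2 * k) : natFlip m < 2 * k := by
  unfold natFlip; split <;> omega

lemma natFlip_ne (m : ℕ) : natFlip m ≠ m := by
  unfold natFlip; split <;> omega

/-- The underlying function of the involution with support
`{(m, x0) | m < 2*k}`. -/
def sigmaFun (n k : ℕ) (x0 : Fin n) (a : ℕ × Fin n) : ℕ × Fin n :=
  if a.2 = x0 ∧ a.1 < 2 * k then (natFlip a.1, x0) else a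

lemma sigmaFun_invol (n k : ℕ) (x0 : Fin n) :
    Function.Involutive (sigmaFun n k x0) := by
  intro a
  by_cases h : a.2 = x0 ∧ a.1 < 2 * k
  · have h1 : sigmaFun n k x0 a = (natFlip a.1, x0) := if_pos h
    rw [h1]
    have h2 : sigmaFun n k x0 (natFlip a.1, x0) = (natFlip (natFlip a.1), x0) :=
      if_pos ⟨rfl, natFlip_lt h.2⟩
    rw [h2, natFlip_invol]
    exact Prod.ext_iff.mpr ⟨rfl, h.1.symm⟩
  · have h1 : sigmaFun n k x0 a = a := if_neg h
    rw [h1, h1]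

/-- The involution itself, as a permutation. -/
def sigmaPerm (n k : ℕ) (x0 : Fin n) : Equiv.Perm (ℕ × Fin n) :=
  (sigmaFun_invol n k x0).toPerm

lemma sigmaPerm_apply (n k : ℕ) (x0 : Fin n) (a : ℕ × Fin n) :
    sigmaPerm n k x0 a = sigmaFun n k x0 a := rfl

lemma sigmaPerm_sq (n k : ℕ) (x0 : Fin n) :
    sigmaPerm n k x0 ^ 2 = 1 :=
  Equiv.ext fun a => by
    rw [pow_two]
    exact sigmaFun_invol n k x0 a

lemma sigmaPerm_mem_houghton (n k : ℕ) (x0 : Fin n) :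
    sigmaPerm n k x0 ∈ Houghton n := by
  refine ⟨0, fun x => ⟨2 * k, fun i hi => ?_⟩⟩
  have : sigmaPerm n k x0 (i, x) = (i, x) := by
    rw [sigmaPerm_apply, sigmaFun, if_neg]
    rintro ⟨-, h2⟩; omega
  rw [this]; simp

/-- The set of points moved by `sigmaPerm n k x0`. -/
lemma sigmaPerm_moved (n k : ℕ) (x0 : Fin n) :
    {a : ℕ × Fin n | sigmaPerm n k x0 a ≠ a} =
      (fun m => (m, x0)) '' (Set.Iio (2 * k)) := by
  ext a
  simp only [Set.mem_setOf_eq, Set.mem_image, Set.mem_Iio]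
  constructor
  · intro ha
    by_cases h : a.2 = x0 ∧ a.1 < 2 * k
    · exact ⟨a.1, h.2, Prod.ext_iff.mpr ⟨rfl, h.1.symm⟩⟩
    · exact absurd (by rw [sigmaPerm_apply, sigmaFun, if_neg h]) ha
  · rintro ⟨m, hm, rfl⟩
    rw [sigmaPerm_apply, sigmaFun, if_pos ⟨rfl, hm⟩]
    intro hc
    exact natFlip_ne m (congrArg Prod.fst hc)

lemma sigmaPerm_moved_card (n k : ℕ) (x0 : Fin n) :
    Set.ncard {a : ℕ × Fin n | sigmaPerm n k x0 a ≠ a} = 2 * k := by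
  rw [sigmaPerm_moved,
    Set.ncard_image_of_injective _ (fun a b hab => congrArg Prod.fst hab),
    ← Finset.coe_range, Set.ncard_coe_finset, Finset.card_range]

lemma sigmaPerm_ne_one (n : ℕ) (k : ℕ) (hk : 0 < k) (x0 : Fin n) :
    sigmaPerm n k x0 ≠ 1 := by
  intro h
  have h0 : sigmaPerm n k x0 (0, x0) = (0, x0) := by rw [h]; rfl
  rw [sigmaPerm_apply, sigmaFun, if_pos ⟨rfl, by omega⟩] at h0
  exact natFlip_ne 0 (congrArg Prod.fst h0)

lemma conj_moved (α : Type*) (h σ : Equiv.Perm α) :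
    {a : α | (h * σ * h⁻¹) a ≠ a} = ⇑h '' {a : α | σ a ≠ a} := by
  ext a
  simp only [Set.mem_setOf_eq, Equiv.Perm.mul_apply]
  constructor
  · intro ha
    refine ⟨h⁻¹ a, fun hc => ?_, by simp⟩
    apply ha
    rw [hc]; simp
  · rintro ⟨b, hb, rfl⟩
    rw [show h⁻¹ (h b) = b from Equiv.symm_apply_apply h b]
    exact fun hc => hb (h.injective hc)

/-- For every `n ≥ 1` there is an infinite sequence
`(Q_i)_{i ∈ ℕ}` of subgroups of Houghton's group `H_n`, each of order `2`,
no two of which are conjugate in `H_n`.  Hence `H_n` has infinitely many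
conjugacy classes of subgroups isomorphic to the cyclic group of order `2`
(so `H_n` is not quasi-`O_Fin FP₀`). -/
theorem houghton_infinitely_many_conjugacy_classes_of_C2 (n : ℕ)
    (hn : 1 ≤ n) :
    ∃ Q : ℕ → Subgroup (Equiv.Perm (ℕ × Fin n)),
      (∀ i, Q i ≤ Houghton n) ∧ (∀ i, Nat.card (Q i) = 2) ∧
      ∀ i j, i ≠ j → ∀ h ∈ Houghton n,
        Subgroup.map (MulAut.conj h).toMonoidHom (Q i) ≠ Q j := by
  have hsq : ∀ i : ℕ, sigmaPerm n (i + 1) (⟨0, hn⟩ : Fin n) ^ 2 = 1 :=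
    fun i => sigmaPerm_sq n (i + 1) _
  have hne1 : ∀ i : ℕ, sigmaPerm n (i + 1) (⟨0, hn⟩ : Fin n) ≠ 1 :=
    fun i => sigmaPerm_ne_one n (i + 1) (by omega) _
  refine ⟨fun i => Subgroup.zpowers (sigmaPerm n (i + 1) ⟨0, hn⟩), ?_, ?_, ?_⟩
  · intro i
    rw [Subgroup.zpowers_le]
    exact sigmaPerm_mem_houghton n (i + 1) _
  · intro i
    rw [Nat.card_zpowers, orderOf_eq_prime (hsq i) (hne1 i)]
  · intro i j hij h _ hQ
    have hQ' : Subgroup.map (MulAut.conj h).toMonoidHom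
        (Subgroup.zpowers (sigmaPerm n (i + 1) ⟨0, hn⟩)) =
        Subgroup.zpowers (sigmaPerm n (j + 1) ⟨0, hn⟩) := hQ
    have hmem : (MulAut.conj h).toMonoidHom (sigmaPerm n (i + 1) ⟨0, hn⟩) ∈
        Subgroup.zpowers (sigmaPerm n (j + 1) ⟨0, hn⟩) := by
      rw [← hQ']
      exact Subgroup.mem_map_of_mem _ (Subgroup.mem_zpowers _)
    obtain ⟨k, hk⟩ := Subgroup.mem_zpowers_iff.mp hmem
    have hconj : (MulAut.conj h).toMonoidHom (sigmaPerm n (i + 1) ⟨0, hn⟩) =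
        h * sigmaPerm n (i + 1) ⟨0, hn⟩ * h⁻¹ := rfl
    have h2 : sigmaPerm n (j + 1) (⟨0, hn⟩ : Fin n) ^ (2 : ℤ) = 1 := by
      rw [show (2 : ℤ) = ((2 : ℕ) : ℤ) from rfl, zpow_natCast, hsq j]
    have hkval : sigmaPerm n (j + 1) (⟨0, hn⟩ : Fin n) ^ k =
        sigmaPerm n (j + 1) ⟨0, hn⟩ := by
      rcases Int.even_or_odd k with ⟨m, hm⟩ | ⟨m, hm⟩
      · exfalso
        have hzero : sigmaPerm n (j + 1) (⟨0, hn⟩ : Fin n) ^ k = 1 := by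
          rw [hm, ← two_mul, zpow_mul, h2, one_zpow]
        rw [hk, hconj] at hzero
        apply hne1 i
        have := congrArg (fun g => h⁻¹ * g * h) hzero
        simpa [mul_assoc] using this
      · rw [hm, zpow_add, zpow_mul, h2, one_zpow, one_mul, zpow_one]
    have heq : h * sigmaPerm n (i + 1) ⟨0, hn⟩ * h⁻¹ =
        sigmaPerm n (j + 1) ⟨0, hn⟩ := by rw [← hconj, ← hk, hkval]
    have hc2 : Set.ncard
        {a : ℕ × Fin n | (h * sigmaPerm n (i + 1) ⟨0, hn⟩ * h⁻¹) a ≠ a} =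
        2 * (i + 1) := by
      rw [conj_moved, Set.ncard_image_of_injective _ h.injective,
        sigmaPerm_moved_card]
    rw [heq, sigmaPerm_moved_card] at hc2
    omega
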